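/- The convexifiable domain K(X) of a CC space X is a semiconvex set under P_λ(x,y) := [λ,x;1−λ,y]: it satisfies reflexivity P_λ(x,x)=x, symmetry P_λ(x,y)=P_{1−λ}(y,x), and the associativity law P_r(P_λ(x,y),z) = P_{rλ}(x, P_μ(y,z)) whenever r = μ/(1−λ+λμ) with λ,μ ∈ (0,1). -/

import Mathlib

open scoped BigOperators
open Filter MeasureTheory

/-- A convex combination space (Terán–Molchanov): a metric space with an
`n`-ary convex combination operation for positive weights summing to `1`. -/
structure CCSpace (X : Type) [MetricSpace X] where
  /-- the convex combination operation `[w 0, u 0; …; w (n-1), u (n-1)]` -/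
  comb : ∀ {n : ℕ}, (Fin n → ℝ) → (Fin n → X) → X
  /-- the convexification operator -/
  K : X → X
  comb_single : ∀ u : X, comb (fun _ : Fin 1 => (1 : ℝ)) (fun _ => u) = u
  /-- (CC.i) commutativity -/
  comb_perm : ∀ {n : ℕ} (w : Fin n → ℝ) (u : Fin n → X) (σ : Equiv.Perm (Fin n)),
    (∀ i, 0 < w i) → (∑ i, w i) = 1 → comb w u = comb (w ∘ σ) (u ∘ σ)
  /-- (CC.ii) associativity: the last two terms may be combined first -/
  comb_assoc : ∀ {n : ℕ} (w : Fin (n + 2) → ℝ) (u : Fin (n + 2) → X),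
    (∀ i, 0 < w i) → (∑ i, w i) = 1 →
    comb w u =
      comb
        (Fin.snoc (fun i : Fin n => w (Fin.castLE (by omega) i))
          (w ⟨n, by omega⟩ + w ⟨n + 1, by omega⟩))
        (Fin.snoc (fun i : Fin n => u (Fin.castLE (by omega) i))
          (comb
            ![w ⟨n, by omega⟩ / (w ⟨n, by omega⟩ + w ⟨n + 1, by omega⟩),
              w ⟨n + 1, by omega⟩ / (w ⟨n, by omega⟩ + w ⟨n + 1, by omega⟩)]
            ![u ⟨n, by omega⟩, u ⟨n + 1, by omega⟩]))
  /-- (CC.iii) continuity in the weight -/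
  comb_cont : ∀ u v : X,
    ContinuousOn (fun t : ℝ => comb ![t, 1 - t] ![u, v]) (Set.Ioo (0 : ℝ) 1)
  /-- (CC.iv) negative curvature -/
  comb_nc : ∀ {n : ℕ} (w : Fin n → ℝ) (u v : Fin n → X),
    (∀ i, 0 < w i) → (∑ i, w i) = 1 →
    dist (comb w u) (comb w v) ≤ ∑ i, w i * dist (u i) (v i)
  /-- (CC.v) convexification: `[n⁻¹, u]ᵢ₌₁ⁿ → K u` -/
  tendsto_K : ∀ u : X,
    Tendsto (fun n : ℕ => comb (fun _ : Fin n => (n : ℝ)⁻¹) (fun _ => u))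
      atTop (nhds (K u))

namespace CCSpace

variable {X : Type} [MetricSpace X] (S : CCSpace X)

/-- The convexifiable domain `K(X)`: the set of convex points. -/
def KX : Set X := {u : X | S.K u = u}

/-- Binary convex combination with weights in `[0,1]`, extended to the endpoints
by discarding the zero-weight term. -/
noncomputable def comb2 (t : ℝ) (x y : X) : X :=
  if t = 0 then y else if t = 1 then x else S.comb ![t, 1 - t] ![x, y]

/-- Convex combination for nonnegative weights summing to `1`, defined by
discarding the zero-weight terms. -/
noncomputable def combE {n : ℕ} (w : Fin n → ℝ) (u : Fin n → X) : X :=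
  letI : DecidablePred fun i : Fin n => w i ≠ 0 := Classical.decPred _
  S.comb (fun j => w ((Fintype.equivFin {i : Fin n // w i ≠ 0}).symm j))
    (fun j => u ((Fintype.equivFin {i : Fin n // w i ≠ 0}).symm j))

/-- A function is affine if it commutes with all convex combinations. -/
def IsAffine (f : X → ℝ) : Prop :=
  ∀ ⦃n : ℕ⦄ (w : Fin n → ℝ) (x : Fin n → X), (∀ i, 0 < w i) → (∑ i, w i) = 1 →
    f (S.comb w x) = ∑ i, w i * f (x i)

/-- Midpoint convexity. -/
def MidpointConvex (φ : X → ℝ) : Prop :=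
  ∀ x y : X, φ (S.comb ![(1 : ℝ) / 2, 1 / 2] ![x, y]) ≤ (φ x + φ y) / 2

/- ### auxiliary lemmas -/

lemma comb_congr {k : ℕ} {A A' : Fin k → ℝ} {B B' : Fin k → X}
    (h1 : A = A') (h2 : B = B') : S.comb A B = S.comb A' B' := by
  rw [h1, h2]

lemma comb_cast {a b : ℕ} (h : a = b) (w : Fin b → ℝ) (uu : Fin b → X) :
    S.comb (w ∘ Fin.cast h) (uu ∘ Fin.cast h) = S.comb w uu := by
  subst h; rfl

/-- rotating a `cons` into a `snoc` -/
lemma comb_rot {m : ℕ} (v : Fin m → ℝ) (xx : Fin m → X) (t : ℝ) (q : X)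
    (hpos : ∀ i, 0 < (Fin.cons t v : Fin (m+1) → ℝ) i)
    (hsum : ∑ i, (Fin.cons t v : Fin (m+1) → ℝ) i = 1) :
    S.comb (Fin.cons t v) (Fin.cons q xx) = S.comb (Fin.snoc v t) (Fin.snoc xx q) := by
  have h := S.comb_perm (Fin.cons t v) (Fin.cons q xx) (finRotate (m + 1)) hpos hsum
  rw [h]
  exact S.comb_congr (Fin.snoc_eq_cons_rotate v t).symm (Fin.snoc_eq_cons_rotate xx q).symm

/-- the flattening lemma: a scaled convex combination appended at the end may be
collapsed into a single point. -/
lemma flat : ∀ (n : ℕ) (w : Fin (n + 1) → ℝ) (uu : Fin (n + 1) → X) (m : ℕ)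
    (v : Fin m → ℝ) (xx : Fin m → X) (t : ℝ), (∀ i, 0 < v i) → 0 < t →
    (∀ i, 0 < w i) → (∑ i, v i) + t = 1 → (∑ i, w i) = 1 →
    S.comb (Fin.append v (fun i => t * w i)) (Fin.append xx uu)
      = S.comb (Fin.snoc v t) (Fin.snoc xx (S.comb w uu)) := by
  intro n
  induction n with
  | zero =>
    intro w uu m v xx t hv ht hw hsv hsw
    rw [Fin.sum_univ_one] at hsw
    have hw0 : (fun i : Fin 1 => t * w i) = fun _ : Fin 1 => t := by
      funext i
      have hi : i = 0 := by omega
      rw [hi, hsw, mul_one]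
    have huu : uu = fun _ : Fin 1 => uu 0 := funext fun i => by
      have hi : i = 0 := by omega
      rw [hi]
    have hcomb : S.comb w uu = uu 0 := by
      have hw1 : w = fun _ : Fin 1 => (1 : ℝ) := funext fun i => by
        have hi : i = 0 := by omega
        rw [hi]; exact hsw
      rw [hw1, huu]; exact S.comb_single (uu 0)
    rw [hcomb, hw0, Fin.append_right_eq_snoc v (fun _ : Fin 1 => t),
      Fin.append_right_eq_snoc xx uu]
  | succ n ih =>
    intro w uu m v xx t hv ht hw hsv hsw
    set W : Fin (m + (n + 2)) → ℝ := Fin.append v (fun i => t * w i) with hWdef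
    set U : Fin (m + (n + 2)) → X := Fin.append xx uu with hUdef
    have hWpos : ∀ i, 0 < W i := by
      intro i
      refine Fin.addCases (fun j => ?_) (fun j => ?_) i
      · rw [hWdef, Fin.append_left]; exact hv j
      · rw [hWdef, Fin.append_right]; exact mul_pos ht (hw j)
    have hWsum : ∑ i, W i = 1 := by
      rw [hWdef, Fin.sum_univ_add]
      simp only [Fin.append_left, Fin.append_right]
      rw [← Finset.mul_sum, hsw, mul_one, hsv]
    have key := S.comb_assoc (n := m + n) W U hWpos hWsum
    -- the combined tail point
    set p : X := S.comb
        ![w ⟨n, by omega⟩ / (w ⟨n, by omega⟩ + w ⟨n + 1, by omega⟩),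
          w ⟨n + 1, by omega⟩ / (w ⟨n, by omega⟩ + w ⟨n + 1, by omega⟩)]
        ![uu ⟨n, by omega⟩, uu ⟨n + 1, by omega⟩] with hpdef
    set w' : Fin (n + 1) → ℝ := Fin.snoc (fun i : Fin n => w (Fin.castLE (by omega) i))
        (w ⟨n, by omega⟩ + w ⟨n + 1, by omega⟩) with hw'def
    set u' : Fin (n + 1) → X := Fin.snoc (fun i : Fin n => uu (Fin.castLE (by omega) i)) p
      with hu'def
    have claimW : (Fin.snoc (fun i : Fin (m + n) => W (Fin.castLE (by omega) i))
        (W ⟨m + n, by omega⟩ + W ⟨m + n + 1, by omega⟩) : Fin (m + n + 1) → ℝ)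
        = Fin.append v (fun i => t * w' i) := by
      funext i
      refine Fin.lastCases ?_ (fun j => ?_) i
      · rw [Fin.snoc_last]
        rw [show (Fin.last (m + n) : Fin (m + (n + 1))) = Fin.natAdd m (Fin.last n) from rfl,
          Fin.append_right]
        rw [hw'def, Fin.snoc_last, hWdef]
        rw [show (⟨m + n, by omega⟩ : Fin (m + (n + 2))) = Fin.natAdd m ⟨n, by omega⟩ from rfl,
          show (⟨m + n + 1, by omega⟩ : Fin (m + (n + 2)))
            = Fin.natAdd m ⟨n + 1, by omega⟩ from rfl, Fin.append_right, Fin.append_right]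
        ring
      · rw [Fin.snoc_castSucc]
        refine Fin.addCases (fun jl => ?_) (fun jr => ?_) j
        · rw [show (Fin.castLE (by omega) (Fin.castAdd n jl) : Fin (m + (n + 2)))
            = Fin.castAdd (n + 2) jl from rfl, hWdef, Fin.append_left]
          rw [show (Fin.castSucc (Fin.castAdd n jl) : Fin (m + (n + 1)))
            = Fin.castAdd (n + 1) jl from rfl, Fin.append_left]
        · rw [show (Fin.castLE (by omega) (Fin.natAdd m jr) : Fin (m + (n + 2)))
            = Fin.natAdd m (Fin.castLE (by omega) jr) from rfl, hWdef, Fin.append_right]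
          rw [show (Fin.castSucc (Fin.natAdd m jr) : Fin (m + (n + 1)))
            = Fin.natAdd m (Fin.castSucc jr) from rfl, Fin.append_right]
          rw [hw'def, Fin.snoc_castSucc]
    have claimU : (Fin.snoc (fun i : Fin (m + n) => U (Fin.castLE (by omega) i))
        (S.comb
          ![W ⟨m + n, by omega⟩ / (W ⟨m + n, by omega⟩ + W ⟨m + n + 1, by omega⟩),
            W ⟨m + n + 1, by omega⟩ / (W ⟨m + n, by omega⟩ + W ⟨m + n + 1, by omega⟩)]
          ![U ⟨m + n, by omega⟩, U ⟨m + n + 1, by omega⟩]) : Fin (m + n + 1) → X)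
        = Fin.append xx u' := by
      funext i
      refine Fin.lastCases ?_ (fun j => ?_) i
      · rw [Fin.snoc_last]
        rw [show (Fin.last (m + n) : Fin (m + (n + 1))) = Fin.natAdd m (Fin.last n) from rfl,
          Fin.append_right, hu'def, Fin.snoc_last, hpdef]
        refine S.comb_congr ?_ ?_
        · have hW1 : W ⟨m + n, by omega⟩ = t * w ⟨n, by omega⟩ := by
            rw [hWdef, show (⟨m + n, by omega⟩ : Fin (m + (n + 2)))
              = Fin.natAdd m ⟨n, by omega⟩ from rfl, Fin.append_right]
          have hW2 : W ⟨m + n + 1, by omega⟩ = t * w ⟨n + 1, by omega⟩ := by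
            rw [hWdef, show (⟨m + n + 1, by omega⟩ : Fin (m + (n + 2)))
              = Fin.natAdd m ⟨n + 1, by omega⟩ from rfl, Fin.append_right]
          rw [hW1, hW2, ← mul_add, mul_div_mul_left _ _ (ne_of_gt ht),
            mul_div_mul_left _ _ (ne_of_gt ht)]
        · rw [hUdef, show (⟨m + n, by omega⟩ : Fin (m + (n + 2)))
            = Fin.natAdd m ⟨n, by omega⟩ from rfl,
            show (⟨m + n + 1, by omega⟩ : Fin (m + (n + 2)))
            = Fin.natAdd m ⟨n + 1, by omega⟩ from rfl, Fin.append_right, Fin.append_right]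
      · rw [Fin.snoc_castSucc]
        refine Fin.addCases (fun jl => ?_) (fun jr => ?_) j
        · rw [show (Fin.castLE (by omega) (Fin.castAdd n jl) : Fin (m + (n + 2)))
            = Fin.castAdd (n + 2) jl from rfl, hUdef, Fin.append_left]
          rw [show (Fin.castSucc (Fin.castAdd n jl) : Fin (m + (n + 1)))
            = Fin.castAdd (n + 1) jl from rfl, Fin.append_left]
        · rw [show (Fin.castLE (by omega) (Fin.natAdd m jr) : Fin (m + (n + 2)))
            = Fin.natAdd m (Fin.castLE (by omega) jr) from rfl, hUdef, Fin.append_right]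
          rw [show (Fin.castSucc (Fin.natAdd m jr) : Fin (m + (n + 1)))
            = Fin.natAdd m (Fin.castSucc jr) from rfl, Fin.append_right]
          rw [hu'def, Fin.snoc_castSucc]
    have hw'pos : ∀ i, 0 < w' i := by
      intro i
      refine Fin.lastCases ?_ (fun j => ?_) i
      · rw [hw'def, Fin.snoc_last]; exact add_pos (hw _) (hw _)
      · rw [hw'def, Fin.snoc_castSucc]; exact hw _
    have hw'sum : ∑ i, w' i = 1 := by
      rw [Fin.sum_univ_castSucc]
      simp only [hw'def, Fin.snoc_castSucc, Fin.snoc_last]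
      rw [Fin.sum_univ_castSucc (n := n + 1)] at hsw
      rw [Fin.sum_univ_castSucc (n := n)] at hsw
      have h1 : ∀ i : Fin n, w (Fin.castSucc (Fin.castSucc i)) = w (Fin.castLE (by omega) i) :=
        fun i => rfl
      have h2 : w (Fin.castSucc (Fin.last n)) = w ⟨n, by omega⟩ := rfl
      have h3 : w (Fin.last (n + 1)) = w ⟨n + 1, by omega⟩ := rfl
      rw [Finset.sum_congr rfl (fun i _ => h1 i), h2, h3] at hsw
      linarith [hsw]
    have hassoc2 := S.comb_assoc (n := n) w uu hw hsw
    calc S.comb W U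
        = S.comb (Fin.append v (fun i => t * w' i)) (Fin.append xx u') :=
          key.trans (S.comb_congr claimW claimU)
      _ = S.comb (Fin.snoc v t) (Fin.snoc xx (S.comb w' u')) :=
          ih w' u' m v xx t hv ht hw'pos hsv hw'sum
      _ = S.comb (Fin.snoc v t) (Fin.snoc xx (S.comb w uu)) := by
          exact congrArg (fun q => S.comb (Fin.snoc v t) (Fin.snoc xx q)) hassoc2.symm


/-- flatten a convex combination sitting after a single `cons`-ed weight -/
lemma flatc {n : ℕ} (w : Fin (n + 1) → ℝ) (uu : Fin (n + 1) → X) (s t : ℝ) (q : X)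
    (hs : 0 < s) (ht : 0 < t) (hw : ∀ i, 0 < w i) (hst : s + t = 1)
    (hsw : ∑ i, w i = 1) :
    S.comb (Fin.cons s (fun i => t * w i) : Fin (n + 2) → ℝ)
        (Fin.cons q uu : Fin (n + 2) → X)
      = S.comb ![s, t] ![q, S.comb w uu] := by
  have hv : ∀ i : Fin 1, 0 < (![s] : Fin 1 → ℝ) i := by
    intro i
    have hi : i = 0 := by omega
    rw [hi]; simpa using hs
  have hsv : (∑ i, (![s] : Fin 1 → ℝ) i) + t = 1 := by
    rw [Fin.sum_univ_one]; simpa using hst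
  have hf := S.flat n w uu 1 ![s] ![q] t hv ht hw hsv hsw
  have hc : (1 + (n + 1)) = (n + 2) := by omega
  have hl1 : Fin.append ![s] (fun i => t * w i)
      = (Fin.cons s (fun i => t * w i) : Fin (n + 2) → ℝ) ∘ Fin.cast hc := by
    rw [Fin.append_left_eq_cons]
    rfl
  have hl2 : Fin.append ![q] uu = (Fin.cons q uu : Fin (n + 2) → X) ∘ Fin.cast hc := by
    rw [Fin.append_left_eq_cons]
    rfl
  rw [hl1, hl2, S.comb_cast hc] at hf
  rw [hf]
  refine S.comb_congr ?_ ?_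
  · funext i; fin_cases i <;> simp [Fin.snoc]
  · funext i; fin_cases i <;> simp [Fin.snoc]

/-- symmetry of binary combinations -/
lemma swap2 (p q : ℝ) (hp : 0 < p) (hq : 0 < q) (h : p + q = 1) (c d : X) :
    S.comb ![p, q] ![c, d] = S.comb ![q, p] ![d, c] := by
  have hpos : ∀ i, 0 < (![p, q] : Fin 2 → ℝ) i := by
    intro i; fin_cases i <;> simpa
  have hsum : ∑ i, (![p, q] : Fin 2 → ℝ) i = 1 := by
    rw [Fin.sum_univ_two]; simpa using h
  have hperm := S.comb_perm ![p, q] ![c, d] (Equiv.swap 0 1) hpos hsum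
  rw [hperm]
  refine S.comb_congr ?_ ?_ <;>
    · funext i; fin_cases i <;> simp [Equiv.swap_apply_left, Equiv.swap_apply_right]

/-- the `n`-th convexification iterate -/
noncomputable def en (u : X) (n : ℕ) : X :=
  S.comb (fun _ : Fin n => (n : ℝ)⁻¹) (fun _ => u)

lemma rat (u : X) (a b : ℕ) (ha : 0 < a) (hb : 0 < b) :
    S.comb ![(a : ℝ) / ((a : ℝ) + b), (b : ℝ) / ((a : ℝ) + b)] ![S.en u a, S.en u b]
      = S.en u (a + b) := by
  obtain ⟨a', rfl⟩ : ∃ a', a = a' + 1 := ⟨a - 1, by omega⟩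
  obtain ⟨b', rfl⟩ : ∃ b', b = b' + 1 := ⟨b - 1, by omega⟩
  set A : ℕ := a' + 1
  set B : ℕ := b' + 1
  have hA : (0 : ℝ) < A := by positivity
  have hB : (0 : ℝ) < B := by positivity
  have hN : (0 : ℝ) < (A : ℝ) + B := by positivity
  have hNcast : ((A + B : ℕ) : ℝ) = (A : ℝ) + B := by push_cast; ring
  -- step 1 : split the equal-weight combination
  have step1 : S.en u (A + B)
      = S.comb (Fin.append (fun _ : Fin A => ((A : ℝ) + B)⁻¹)
          (fun _ : Fin B => ((B : ℝ) / ((A : ℝ) + B)) * (B : ℝ)⁻¹))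
          (Fin.append (fun _ : Fin A => u) (fun _ : Fin B => u)) := by
    refine S.comb_congr ?_ ?_
    · funext i
      refine Fin.addCases (fun j => ?_) (fun j => ?_) i
      · rw [Fin.append_left, hNcast]
      · rw [Fin.append_right, hNcast]
        field_simp
    · funext i
      refine Fin.addCases (fun j => ?_) (fun j => ?_) i <;>
        simp [Fin.append_left, Fin.append_right]
  -- step 2 : flatten the right block
  have step2 : S.comb (Fin.append (fun _ : Fin A => ((A : ℝ) + B)⁻¹)
          (fun _ : Fin B => ((B : ℝ) / ((A : ℝ) + B)) * (B : ℝ)⁻¹))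
          (Fin.append (fun _ : Fin A => u) (fun _ : Fin B => u))
      = S.comb (Fin.snoc (fun _ : Fin A => ((A : ℝ) + B)⁻¹) ((B : ℝ) / ((A : ℝ) + B)))
          (Fin.snoc (fun _ : Fin A => u) (S.en u B)) := by
    refine S.flat b' (fun _ : Fin B => (B : ℝ)⁻¹) (fun _ => u) A _ _ _
      (fun i => by positivity) (by positivity) (fun i => by positivity) ?_ ?_
    · rw [Finset.sum_const, Finset.card_univ, Fintype.card_fin, nsmul_eq_mul]
      field_simp
    · rw [Finset.sum_const, Finset.card_univ, Fintype.card_fin, nsmul_eq_mul]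
      exact mul_inv_cancel₀ hB.ne'
  -- step 3 : rotate
  have step3 : S.comb (Fin.snoc (fun _ : Fin A => ((A : ℝ) + B)⁻¹) ((B : ℝ) / ((A : ℝ) + B)))
          (Fin.snoc (fun _ : Fin A => u) (S.en u B))
      = S.comb (Fin.cons ((B : ℝ) / ((A : ℝ) + B)) (fun _ : Fin A => ((A : ℝ) + B)⁻¹)
          : Fin (A + 1) → ℝ)
          (Fin.cons (S.en u B) (fun _ : Fin A => u) : Fin (A + 1) → X) := by
    refine (S.comb_rot _ _ _ _ ?_ ?_).symm
    · intro i
      refine Fin.cases ?_ (fun j => ?_) i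
      · rw [Fin.cons_zero]; positivity
      · rw [Fin.cons_succ]; positivity
    · rw [Fin.sum_univ_succ]
      simp only [Fin.cons_zero, Fin.cons_succ]
      rw [Finset.sum_const, Finset.card_univ, Fintype.card_fin, nsmul_eq_mul]
      field_simp
      ring
  -- step 4 : flatten the left block
  have step4 : S.comb (Fin.cons ((B : ℝ) / ((A : ℝ) + B)) (fun _ : Fin A => ((A : ℝ) + B)⁻¹)
          : Fin (A + 1) → ℝ)
          (Fin.cons (S.en u B) (fun _ : Fin A => u) : Fin (A + 1) → X)
      = S.comb ![(B : ℝ) / ((A : ℝ) + B), (A : ℝ) / ((A : ℝ) + B)] ![S.en u B, S.en u A] := by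
    have h4 := S.flatc (fun _ : Fin A => (A : ℝ)⁻¹) (fun _ => u)
      ((B : ℝ) / ((A : ℝ) + B)) ((A : ℝ) / ((A : ℝ) + B)) (S.en u B)
      (by positivity) (by positivity) (fun i => by positivity)
      (by field_simp; ring)
      (by rw [Finset.sum_const, Finset.card_univ, Fintype.card_fin, nsmul_eq_mul]
          exact mul_inv_cancel₀ hA.ne')
    have hen : S.en u A = S.comb (fun _ : Fin A => (A : ℝ)⁻¹) (fun _ => u) := rfl
    rw [hen, ← h4]
    refine S.comb_congr ?_ rfl
    funext i
    refine Fin.cases rfl (fun j => ?_) i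
    rw [Fin.cons_succ, Fin.cons_succ]
    field_simp
  -- step 5 : swap
  have step5 : S.comb ![(B : ℝ) / ((A : ℝ) + B), (A : ℝ) / ((A : ℝ) + B)] ![S.en u B, S.en u A]
      = S.comb ![(A : ℝ) / ((A : ℝ) + B), (B : ℝ) / ((A : ℝ) + B)] ![S.en u A, S.en u B] := by
    refine S.swap2 _ _ (by positivity) (by positivity) (by field_simp; ring) _ _
  rw [step1, step2, step3, step4, step5]


lemma tendsto_en (u : X) (hu : S.K u = u) (c : ℕ) (hc : 0 < c) :
    Tendsto (fun k : ℕ => S.en u (c * k)) atTop (nhds u) := by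
  have hmul : Tendsto (fun k : ℕ => c * k) atTop atTop :=
    tendsto_atTop_mono (fun k => Nat.le_mul_of_pos_left k hc) tendsto_id
  have h := (S.tendsto_K u).comp hmul
  rw [hu] at h
  exact h

lemma idem_rat (u : X) (hu : S.K u = u) (a b : ℕ) (ha : 0 < a) (hb : 0 < b) :
    S.comb ![(a : ℝ) / ((a : ℝ) + b), (b : ℝ) / ((a : ℝ) + b)] ![u, u] = u := by
  have hA : (0 : ℝ) < a := by exact_mod_cast ha
  have hB : (0 : ℝ) < b := by exact_mod_cast hb
  have hN : (0 : ℝ) < (a : ℝ) + b := by linarith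
  set lA : ℝ := (a : ℝ) / ((a : ℝ) + b) with hlA
  set lB : ℝ := (b : ℝ) / ((a : ℝ) + b) with hlB
  have hlApos : 0 < lA := by positivity
  have hlBpos : 0 < lB := by positivity
  have hlsum : lA + lB = 1 := by rw [hlA, hlB]; field_simp
  -- the key identity at level k
  have hk : ∀ k : ℕ, 0 < k →
      S.comb ![lA, lB] ![S.en u (a * k), S.en u (b * k)] = S.en u ((a + b) * k) := by
    intro k hkpos
    have hK : (0 : ℝ) < k := by exact_mod_cast hkpos
    have h := S.rat u (a * k) (b * k) (by positivity) (by positivity)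
    have e1 : ((a * k : ℕ) : ℝ) / (((a * k : ℕ) : ℝ) + ((b * k : ℕ) : ℝ)) = lA := by
      rw [hlA]; push_cast; rw [div_eq_div_iff (by positivity) (by positivity)]; ring
    have e2 : ((b * k : ℕ) : ℝ) / (((a * k : ℕ) : ℝ) + ((b * k : ℕ) : ℝ)) = lB := by
      rw [hlB]; push_cast; rw [div_eq_div_iff (by positivity) (by positivity)]; ring
    have e3 : a * k + b * k = (a + b) * k := by ring
    rw [e1, e2, e3] at h
    exact h
  set P : X := S.comb ![lA, lB] ![u, u] with hP
  -- the distance estimate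
  have hdist : ∀ k : ℕ, 0 < k →
      dist P (S.en u ((a + b) * k))
        ≤ lA * dist u (S.en u (a * k)) + lB * dist u (S.en u (b * k)) := by
    intro k hkpos
    rw [← hk k hkpos, hP]
    have hpos : ∀ i, 0 < (![lA, lB] : Fin 2 → ℝ) i := by
      intro i; fin_cases i <;> simpa
    have hsum : ∑ i, (![lA, lB] : Fin 2 → ℝ) i = 1 := by
      rw [Fin.sum_univ_two]; simpa using hlsum
    have h := S.comb_nc ![lA, lB] ![u, u] ![S.en u (a * k), S.en u (b * k)] hpos hsum
    rw [Fin.sum_univ_two] at h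
    simpa using h
  -- limits
  have h1 : Tendsto (fun k : ℕ => dist u (S.en u (a * k))) atTop (nhds 0) := by
    have := Tendsto.dist (tendsto_const_nhds (x := u) (f := atTop (α := ℕ)))
      (S.tendsto_en u hu a ha)
    simpa using this
  have h2 : Tendsto (fun k : ℕ => dist u (S.en u (b * k))) atTop (nhds 0) := by
    have := Tendsto.dist (tendsto_const_nhds (x := u) (f := atTop (α := ℕ)))
      (S.tendsto_en u hu b hb)
    simpa using this
  have hbound : Tendsto (fun k : ℕ =>
      lA * dist u (S.en u (a * k)) + lB * dist u (S.en u (b * k))) atTop (nhds 0) := by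
    have := (h1.const_mul lA).add (h2.const_mul lB)
    simpa using this
  have hPen : Tendsto (fun k : ℕ => dist P (S.en u ((a + b) * k))) atTop (nhds 0) := by
    refine squeeze_zero' ?_ ?_ hbound
    · filter_upwards with k using dist_nonneg
    · filter_upwards [eventually_ge_atTop 1] with k hk1 using hdist k hk1
  have h3 : Tendsto (fun k : ℕ => dist (S.en u ((a + b) * k)) u) atTop (nhds 0) := by
    have := Tendsto.dist (S.tendsto_en u hu (a + b) (by omega))
      (tendsto_const_nhds (x := u) (f := atTop (α := ℕ)))
    simpa using this
  have hsum0 : Tendsto (fun k : ℕ =>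
      dist P (S.en u ((a + b) * k)) + dist (S.en u ((a + b) * k)) u) atTop (nhds 0) := by
    have := hPen.add h3
    simpa using this
  have hle : dist P u ≤ 0 :=
    ge_of_tendsto hsum0 (Eventually.of_forall fun k => dist_triangle _ _ _)
  exact eq_of_dist_eq_zero (le_antisymm hle dist_nonneg)

lemma idem (u : X) (hu : S.K u = u) (t : ℝ) (ht : t ∈ Set.Ioo (0 : ℝ) 1) :
    S.comb ![t, 1 - t] ![u, u] = u := by
  set s : Set ℝ := {t | ∃ a b : ℕ, 0 < a ∧ 0 < b ∧ t = (a : ℝ) / ((a : ℝ) + b)} with hs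
  have hmem : ∀ t' ∈ s, S.comb ![t', 1 - t'] ![u, u] = u := by
    rintro t' ⟨a, b, ha, hb, rfl⟩
    have hA : (0 : ℝ) < a := by exact_mod_cast ha
    have hB : (0 : ℝ) < b := by exact_mod_cast hb
    have h1 : 1 - (a : ℝ) / ((a : ℝ) + b) = (b : ℝ) / ((a : ℝ) + b) := by
      field_simp
      ring
    rw [h1]
    exact S.idem_rat u hu a b ha hb
  have hcl : t ∈ closure s := by
    rw [Metric.mem_closure_iff]
    intro ε hε
    have hlo : max (t - ε) 0 < t := max_lt (by linarith) ht.1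
    have hhi : t < min (t + ε) 1 := lt_min (by linarith) ht.2
    obtain ⟨q, hq1, hq2⟩ := exists_rat_btwn (hlo.trans hhi)
    have hq0 : (0 : ℝ) < q := lt_of_le_of_lt (le_max_right _ _) hq1
    have hq0' : 0 < q := by exact_mod_cast hq0
    have hql : (q : ℝ) < 1 := lt_of_lt_of_le hq2 (min_le_right _ _)
    have hql' : q < 1 := by exact_mod_cast hql
    have hnum : 0 < q.num := Rat.num_pos.mpr hq0'
    have hden : q.num < (q.den : ℤ) := Rat.lt_one_iff_num_lt_denom.mpr hql'
    set a : ℕ := q.num.toNat with hadef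
    have haz : (a : ℤ) = q.num := Int.toNat_of_nonneg hnum.le
    have ha : 0 < a := by omega
    have haden : a < q.den := by omega
    set b : ℕ := q.den - a with hbdef
    have hb : 0 < b := by omega
    have hab : ((a : ℝ) + b) = (q.den : ℝ) := by
      rw [hbdef]
      push_cast [Nat.cast_sub haden.le]
      ring
    refine ⟨(q : ℝ), ⟨a, b, ha, hb, ?_⟩, ?_⟩
    · rw [hab, Rat.cast_def]
      congr 1
      exact_mod_cast haz.symm
    · rw [Real.dist_eq, abs_sub_lt_iff]
      constructor
      · have := lt_of_le_of_lt (le_max_left (t - ε) 0) hq1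
        linarith
      · have := lt_of_lt_of_le hq2 (min_le_left (t + ε) 1)
        linarith
  have hca : ContinuousAt (fun t' : ℝ => S.comb ![t', 1 - t'] ![u, u]) t :=
    (S.comb_cont u u).continuousAt (Ioo_mem_nhds ht.1 ht.2)
  haveI : (nhdsWithin t s).NeBot := mem_closure_iff_nhdsWithin_neBot.mp hcl
  have hT1 : Tendsto (fun t' : ℝ => S.comb ![t', 1 - t'] ![u, u]) (nhdsWithin t s)
      (nhds (S.comb ![t, 1 - t] ![u, u])) :=
    hca.tendsto.mono_left nhdsWithin_le_nhds
  have hT2 : Tendsto (fun t' : ℝ => S.comb ![t', 1 - t'] ![u, u]) (nhdsWithin t s)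
      (nhds u) := by
    refine Tendsto.congr' ?_ tendsto_const_nhds
    filter_upwards [eventually_mem_nhdsWithin] with t' ht' using (hmem t' ht').symm
  exact tendsto_nhds_unique hT1 hT2

end CCSpace

/-- The convexifiable domain is a semiconvex set under
`P_λ(x,y) = [λ,x;1−λ,y]`: reflexivity, symmetry and Świrszcz associativity. -/
theorem stmt5 {X : Type} [MetricSpace X] (S : CCSpace X) (x y z : X)
    (hx : x ∈ S.KX) (hy : y ∈ S.KX) (hz : z ∈ S.KX) (l m : ℝ)
    (hl : l ∈ Set.Ioo (0 : ℝ) 1) (hm : m ∈ Set.Ioo (0 : ℝ) 1)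
    (r : ℝ) (hr : r = m / (1 - l + l * m)) :
    S.comb ![l, 1 - l] ![x, x] = x ∧
      S.comb ![l, 1 - l] ![x, y] = S.comb ![1 - l, l] ![y, x] ∧
      S.comb ![r, 1 - r] ![S.comb ![l, 1 - l] ![x, y], z] =
        S.comb ![r * l, 1 - r * l] ![x, S.comb ![m, 1 - m] ![y, z]] := by
  obtain ⟨hl0, hl1⟩ := hl
  obtain ⟨hm0, hm1⟩ := hm
  have hD : 0 < 1 - l + l * m := by nlinarith
  have hr0 : 0 < r := by rw [hr]; positivity
  have hr1 : r < 1 := by rw [hr, div_lt_one hD]; nlinarith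
  have hrl0 : 0 < r * l := mul_pos hr0 hl0
  have hrl1 : r * l < 1 := by nlinarith
  have hrD : r * (1 - l + l * m) = m := by
    rw [hr]; field_simp
  have key1 : r * (1 - l) + (1 - r) = 1 - r * l := by ring
  have key2 : r * (1 - l) = m * (1 - r * l) := by linear_combination hrD
  have key3 : 1 - r = (1 - m) * (1 - r * l) := by linear_combination (-1 : ℝ) * hrD
  refine ⟨S.idem x hx l ⟨hl0, hl1⟩, S.swap2 l (1 - l) hl0 (by linarith) (by ring) x y, ?_⟩
  set W : Fin 3 → ℝ := ![r * l, r * (1 - l), 1 - r] with hW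
  set U : Fin 3 → X := ![x, y, z] with hU
  have hWpos : ∀ i, 0 < W i := by
    intro i
    fin_cases i
    · show 0 < r * l; exact hrl0
    · show 0 < r * (1 - l); nlinarith
    · show 0 < 1 - r; linarith
  have hWsum : ∑ i, W i = 1 := by
    rw [Fin.sum_univ_three]
    show r * l + r * (1 - l) + (1 - r) = 1
    ring
  have hA := S.comb_assoc (n := 1) W U hWpos hWsum
  have hAW : (Fin.snoc (fun i : Fin 1 => W (Fin.castLE (by omega) i))
      (W ⟨1, by omega⟩ + W ⟨2, by omega⟩) : Fin 2 → ℝ) = ![r * l, 1 - r * l] := by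
    funext i
    fin_cases i
    · rfl
    · show r * (1 - l) + (1 - r) = 1 - r * l
      ring
  have hAU : (Fin.snoc (fun i : Fin 1 => U (Fin.castLE (by omega) i))
      (S.comb
        ![W ⟨1, by omega⟩ / (W ⟨1, by omega⟩ + W ⟨2, by omega⟩),
          W ⟨2, by omega⟩ / (W ⟨1, by omega⟩ + W ⟨2, by omega⟩)]
        ![U ⟨1, by omega⟩, U ⟨2, by omega⟩]) : Fin 2 → X)
      = ![x, S.comb ![m, 1 - m] ![y, z]] := by
    funext i
    fin_cases i
    · rfl
    · show S.comb ![r * (1 - l) / (r * (1 - l) + (1 - r)), (1 - r) / (r * (1 - l) + (1 - r))]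
        ![y, z] = S.comb ![m, 1 - m] ![y, z]
      refine S.comb_congr ?_ rfl
      funext j
      fin_cases j
      · show r * (1 - l) / (r * (1 - l) + (1 - r)) = m
        rw [key1, key2, mul_div_assoc, div_self (by nlinarith), mul_one]
      · show (1 - r) / (r * (1 - l) + (1 - r)) = 1 - m
        rw [key1, key3, mul_div_assoc, div_self (by nlinarith), mul_one]
  have eqA : S.comb W U
      = S.comb ![r * l, 1 - r * l] ![x, S.comb ![m, 1 - m] ![y, z]] :=
    hA.trans (S.comb_congr hAW hAU)
  -- part B : the other grouping
  set σ : Equiv.Perm (Fin 3) := ⟨![2, 0, 1], ![1, 2, 0], by decide, by decide⟩ with hσ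
  have hperm := S.comb_perm W U σ hWpos hWsum
  set W2 : Fin 3 → ℝ := ![1 - r, r * l, r * (1 - l)] with hW2
  set U2 : Fin 3 → X := ![z, x, y] with hU2
  have hWσ : W ∘ σ = W2 := by
    funext i; fin_cases i <;> rfl
  have hUσ : U ∘ σ = U2 := by
    funext i; fin_cases i <;> rfl
  have hW2pos : ∀ i, 0 < W2 i := by
    intro i
    fin_cases i
    · show 0 < 1 - r; linarith
    · show 0 < r * l; exact hrl0
    · show 0 < r * (1 - l); nlinarith
  have hW2sum : ∑ i, W2 i = 1 := by
    rw [Fin.sum_univ_three]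
    show 1 - r + r * l + r * (1 - l) = 1
    ring
  have hB := S.comb_assoc (n := 1) W2 U2 hW2pos hW2sum
  have hBW : (Fin.snoc (fun i : Fin 1 => W2 (Fin.castLE (by omega) i))
      (W2 ⟨1, by omega⟩ + W2 ⟨2, by omega⟩) : Fin 2 → ℝ) = ![1 - r, r] := by
    funext i
    fin_cases i
    · rfl
    · show r * l + r * (1 - l) = r
      ring
  have hBU : (Fin.snoc (fun i : Fin 1 => U2 (Fin.castLE (by omega) i))
      (S.comb
        ![W2 ⟨1, by omega⟩ / (W2 ⟨1, by omega⟩ + W2 ⟨2, by omega⟩),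
          W2 ⟨2, by omega⟩ / (W2 ⟨1, by omega⟩ + W2 ⟨2, by omega⟩)]
        ![U2 ⟨1, by omega⟩, U2 ⟨2, by omega⟩]) : Fin 2 → X)
      = ![z, S.comb ![l, 1 - l] ![x, y]] := by
    funext i
    fin_cases i
    · rfl
    · show S.comb ![r * l / (r * l + r * (1 - l)), r * (1 - l) / (r * l + r * (1 - l))]
        ![x, y] = S.comb ![l, 1 - l] ![x, y]
      refine S.comb_congr ?_ rfl
      funext j
      have hrr : r * l + r * (1 - l) = r := by ring
      fin_cases j
      · show r * l / (r * l + r * (1 - l)) = l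
        rw [hrr, mul_comm, mul_div_assoc, div_self (ne_of_gt hr0), mul_one]
      · show r * (1 - l) / (r * l + r * (1 - l)) = 1 - l
        rw [hrr, mul_comm, mul_div_assoc, div_self (ne_of_gt hr0), mul_one]
  have eqB : S.comb W U = S.comb ![1 - r, r] ![z, S.comb ![l, 1 - l] ![x, y]] :=
    (hperm.trans (S.comb_congr hWσ hUσ)).trans (hB.trans (S.comb_congr hBW hBU))
  have hswap := S.swap2 (1 - r) r (by linarith) hr0 (by ring) z (S.comb ![l, 1 - l] ![x, y])
  calc S.comb ![r, 1 - r] ![S.comb ![l, 1 - l] ![x, y], z]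
      = S.comb ![1 - r, r] ![z, S.comb ![l, 1 - l] ![x, y]] := hswap.symm
    _ = S.comb W U := eqB.symm
    _ = S.comb ![r * l, 1 - r * l] ![x, S.comb ![m, 1 - m] ![y, z]] := eqA
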